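/- Let q = 3^r, and let m be a positive integer ≥ 2 written as m = m'·3^j with gcd(m', 3) = 1, and suppose m' does not divide q − 1. Let u be the multiplicative order of q modulo m', and let M be the number of distinct monic irreducible factors of x^m − 1 over F_q of degree less than u. Define ϑ(q,m) := M/m. Then: ϑ(q,m) ≤ 1/2 if m = 2·gcd(q − 1, m'); ϑ(q,m) ≤ 3/8 if m = 4·gcd(q − 1, m'); and ϑ(q,m) ≤ 1/3 otherwise. -/

import Mathlib

open Polynomial

section Helpers

-- (A1) q^d - 1 ∣ q^s - 1 when d ∣ s
private lemma nat_pow_sub_one_dvd {q d s : ℕ} (h : d ∣ s) : q ^ d - 1 ∣ q ^ s - 1 := by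
  obtain ⟨k, rfl⟩ := h
  simpa [pow_mul] using Nat.sub_dvd_pow_sub_pow (q ^ d) 1 k

private lemma poly_pow_sub_one_dvd {R : Type*} [CommRing R] {a b : ℕ} (h : a ∣ b) :
    (X ^ a - 1 : R[X]) ∣ X ^ b - 1 := by
  obtain ⟨k, rfl⟩ := h
  simpa [pow_mul] using sub_dvd_pow_sub_pow (X ^ a : R[X]) 1 k

-- (A2)
private lemma nat_dvd_of_pow_sub_one_dvd {q d u : ℕ} (hq : 2 ≤ q) (hd : 0 < d)
    (h : q ^ d - 1 ∣ q ^ u - 1) : d ∣ u := by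
  have hs : u % d < d := Nat.mod_lt _ hd
  have hsum := Nat.div_add_mod u d
  have hexp : u % d + d * (u / d) = u := by omega
  have hdvd1 : q ^ d - 1 ∣ q ^ u - q ^ (u % d) := by
    have heq : q ^ u - q ^ (u % d) = q ^ (u % d) * (q ^ (d * (u / d)) - 1) := by
      rw [Nat.mul_sub, mul_one, ← pow_add, hexp]
    rw [heq]
    exact Dvd.dvd.mul_left (nat_pow_sub_one_dvd ⟨u / d, rfl⟩) _
  have hle : q ^ (u % d) ≤ q ^ u := Nat.pow_le_pow_right (by omega) (Nat.mod_le _ _)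
  have h1 : 1 ≤ q ^ (u % d) := Nat.one_le_pow _ _ (by omega)
  have h2 : 1 ≤ q ^ u := Nat.one_le_pow _ _ (by omega)
  have hdvd2 : q ^ d - 1 ∣ q ^ (u % d) - 1 := by
    have heq2 : q ^ (u % d) - 1 = (q ^ u - 1) - (q ^ u - q ^ (u % d)) := by omega
    rw [heq2]
    exact Nat.dvd_sub h hdvd1
  have hlt : q ^ (u % d) - 1 < q ^ d - 1 := by
    have := Nat.pow_lt_pow_right (show 1 < q by omega) hs
    omega
  have hz : q ^ (u % d) - 1 = 0 := Nat.eq_zero_of_dvd_of_lt hdvd2 hlt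
  have hmd : u % d = 0 := by
    by_contra hne
    have h3 : 1 ≤ u % d := by omega
    have h4 : q ≤ q ^ (u % d) := by
      calc q = q ^ 1 := (pow_one q).symm
        _ ≤ q ^ (u % d) := Nat.pow_le_pow_right (by omega) h3
    omega
  exact Nat.dvd_of_mod_eq_zero hmd

-- (A3/P3): gcd (n) (q^d - 1) * u ≤ n * gcd u d
private lemma gcd_mul_order_le {n q : ℕ} (hn : 2 ≤ n) (hq : Nat.Coprime q n) (d : ℕ) :
    Nat.gcd n (q ^ d - 1) * orderOf (q : ZMod n) ≤ n * Nat.gcd (orderOf (q : ZMod n)) d := by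
  haveI : NeZero n := ⟨by omega⟩
  have hq1 : 1 ≤ q := by
    rcases Nat.eq_zero_or_pos q with h | h
    · exfalso; rw [h] at hq; simp [Nat.Coprime] at hq; omega
    · exact h
  set u := orderOf (q : ZMod n) with hu
  set c := Nat.gcd n (q ^ d - 1) with hc
  have hcn : c ∣ n := Nat.gcd_dvd_left _ _
  have hcq : c ∣ q ^ d - 1 := Nat.gcd_dvd_right _ _
  have hcpos : 0 < c := Nat.gcd_pos_of_pos_left _ (by omega)
  set Q := ZMod.unitOfCoprime q hq with hQdef
  have hQq : ((Q : (ZMod n)ˣ) : ZMod n) = (q : ZMod n) := ZMod.coe_unitOfCoprime q hq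
  have huQ : u = orderOf Q := by rw [hu, ← hQq, orderOf_units]
  set w := orderOf (Q ^ d) with hwdef
  have hww : w = u / Nat.gcd u d := by rw [hwdef, orderOf_pow, ← huQ]
  -- the image set
  classical
  set B : Finset (ZMod n) :=
    Finset.univ.filter (fun z : ZMod n => (ZMod.castHom hcn (ZMod c)) z = 1) with hB
  have hmaps : ∀ k : ℕ, (((Q ^ d) ^ k : (ZMod n)ˣ) : ZMod n) ∈ B := by
    intro k
    have h1 : (((Q ^ d) ^ k : (ZMod n)ˣ) : ZMod n) = ((q ^ (d * k) : ℕ) : ZMod n) := by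
      rw [← pow_mul, Units.val_pow_eq_pow_val, hQq, Nat.cast_pow]
    rw [hB, Finset.mem_filter]
    refine ⟨Finset.mem_univ _, ?_⟩
    rw [h1, map_natCast]
    have hdvd : c ∣ q ^ (d * k) - 1 := hcq.trans (nat_pow_sub_one_dvd ⟨k, rfl⟩)
    have hmod : (q ^ (d * k)) ≡ 1 [MOD c] :=
      ((Nat.modEq_iff_dvd' (Nat.one_le_pow _ _ (by omega))).mpr hdvd).symm
    have hcast := (ZMod.natCast_eq_natCast_iff _ _ _).mpr hmod
    simpa using hcast
  have hwB : w ≤ B.card := by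
    have hinj : Set.InjOn (fun k : ℕ => (((Q ^ d) ^ k : (ZMod n)ˣ) : ZMod n))
        ((Finset.range w : Finset ℕ) : Set ℕ) := by
      intro a ha b hb hab
      simp only [Finset.coe_range, Set.mem_Iio] at ha hb
      have : (Q ^ d) ^ a = (Q ^ d) ^ b := Units.ext hab
      exact pow_injOn_Iio_orderOf (by simpa [hwdef] using ha) (by simpa [hwdef] using hb) this
    have := Finset.card_le_card_of_injOn _ (fun k _ => hmaps k) hinj
    simpa using this
  have hBcard : B.card ≤ n / c := by
    have : B.card ≤ (Finset.range (n / c)).card := by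
      apply Finset.card_le_card_of_injOn (fun z => (ZMod.val z) / c)
      · intro z hz
        rw [Finset.mem_coe, Finset.mem_range]
        exact Nat.div_lt_div_of_lt_of_dvd hcn (ZMod.val_lt z)
      · intro z1 hz1 z2 hz2 hzz
        simp only [hB, Finset.coe_filter, Set.mem_setOf_eq] at hz1 hz2
        have hval : ∀ z : ZMod n, (ZMod.castHom hcn (ZMod c)) z = 1 → z.val % c = 1 % c := by
          intro z hz
          have h1 : ((z.val : ℕ) : ZMod c) = ((1 : ℕ) : ZMod c) := by
            rw [ZMod.natCast_val, Nat.cast_one]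
            exact hz
          exact (ZMod.natCast_eq_natCast_iff' _ _ _).mp h1
        have e1 := hval z1 hz1.2
        have e2 := hval z2 hz2.2
        have hzz' : z1.val / c = z2.val / c := hzz
        have : z1.val = z2.val := by
          have t1 : z1.val = c * (z1.val / c) + z1.val % c := (Nat.div_add_mod _ _).symm
          have t2 : z2.val = c * (z2.val / c) + z2.val % c := (Nat.div_add_mod _ _).symm
          rw [t1, t2, hzz', e1, e2]
        exact ZMod.val_injective n this
    simpa using this
  have hwn : w * c ≤ n := by
    have h1 : w ≤ n / c := le_trans hwB hBcard
    calc w * c ≤ (n / c) * c := Nat.mul_le_mul_right _ h1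
    _ = n := Nat.div_mul_cancel hcn
  -- assemble
  have hgd : Nat.gcd u d ∣ u := Nat.gcd_dvd_left _ _
  have husplit : u = Nat.gcd u d * w := by
    rw [hww]
    exact (Nat.mul_div_cancel' hgd).symm
  have hfin : c * u = w * c * Nat.gcd u d := by
    conv_lhs => rw [husplit]
    ring
  calc c * u = w * c * Nat.gcd u d := hfin
  _ ≤ n * Nat.gcd u d := Nat.mul_le_mul_right _ hwn

-- (A4)
private lemma three_mul_card_properDivisors_le {u : ℕ} (h2 : 2 ≤ u)
    (hu2 : u ≠ 2) (hu4 : u ≠ 4) (hu6 : u ≠ 6) (hu8 : u ≠ 8) (hu12 : u ≠ 12) :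
    3 * u.properDivisors.card ≤ u := by
  rcases le_or_gt u 30 with h30 | h30
  · interval_cases u <;> simp_all <;> decide
  · classical
    have key : u.properDivisors.card ≤ u / 6 + 4 := by
      have hsplit := Finset.card_filter_add_card_filter_not
        (s := u.properDivisors) (p := fun d => 6 * d ≤ u)
      have h1 : (u.properDivisors.filter (fun d => 6 * d ≤ u)).card ≤ u / 6 := by
        have hsub : u.properDivisors.filter (fun d => 6 * d ≤ u) ⊆ Finset.Icc 1 (u / 6) := by
          intro d hd
          rw [Finset.mem_filter] at hd
          rw [Finset.mem_Icc]
          constructor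
          · exact Nat.pos_of_mem_properDivisors hd.1
          · rw [Nat.le_div_iff_mul_le (by norm_num)]
            omega
        calc (u.properDivisors.filter (fun d => 6 * d ≤ u)).card
            ≤ (Finset.Icc 1 (u / 6)).card := Finset.card_le_card hsub
        _ = u / 6 := by rw [Nat.card_Icc]; omega
      have h2' : (u.properDivisors.filter (fun d => ¬ (6 * d ≤ u))).card ≤ 4 := by
        have : (u.properDivisors.filter (fun d => ¬ (6 * d ≤ u))).card
            ≤ (Finset.Icc 2 5).card := by
          apply Finset.card_le_card_of_injOn (fun d => u / d)
          · intro d hd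
            simp only [Finset.mem_coe] at hd ⊢
            rw [Finset.mem_filter] at hd
            obtain ⟨hdvd, hlt⟩ := Nat.mem_properDivisors.mp hd.1
            have hd0 : 0 < d := Nat.pos_of_mem_properDivisors hd.1
            obtain ⟨k, hk⟩ := hdvd
            have hkval : u / d = k := by rw [hk]; exact Nat.mul_div_cancel_left _ hd0
            rw [Finset.mem_Icc, hkval]
            constructor
            · rcases Nat.lt_or_ge k 2 with h | h
              · interval_cases k <;> omega
              · exact h
            · by_contra hk5
              push_neg at hk5
              have : 6 * d ≤ d * k := by nlinarith
              omega
          · intro d1 hd1 d2 hd2 heq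
            simp only [Finset.coe_filter, Set.mem_setOf_eq] at hd1 hd2
            have h1 := Nat.mem_properDivisors.mp hd1.1
            have h2 := Nat.mem_properDivisors.mp hd2.1
            have e1 : u / (u / d1) = d1 := Nat.div_div_self h1.1 (by omega)
            have e2 : u / (u / d2) = d2 := Nat.div_div_self h2.1 (by omega)
            simp only at heq
            rw [← e1, ← e2, heq]
        simpa using this
      omega
    have hmod := Nat.div_add_mod u 6
    have : u % 6 < 6 := Nat.mod_lt _ (by norm_num)
    omega

end Helpers

section FieldHelpers

variable {F : Type*} [Field F] [Fintype F] [DecidableEq F]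

-- (B6)
private lemma sum_deg_le [CharP F 3] (c : ℕ) (hc : 0 < c) (hc3 : ¬ (3 ∣ c))
    (G : Finset (Polynomial F))
    (hG : ∀ f ∈ G, normalize f = f ∧ Prime f ∧ f ∣ (X ^ c - 1 : Polynomial F)) :
    ∑ f ∈ G, f.natDegree ≤ c := by
  classical
  have hP : (X ^ c - 1 : F[X]) = X ^ c - C 1 := by rw [map_one]
  have hmonic : (X ^ c - 1 : F[X]).Monic := by
    rw [hP]; exact monic_X_pow_sub_C 1 (by omega)
  have hPne : (X ^ c - 1 : F[X]) ≠ 0 := hmonic.ne_zero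
  have hmem : ∀ f ∈ G, f ∈ UniqueFactorizationMonoid.normalizedFactors (X ^ c - 1 : F[X]) := by
    intro f hf
    obtain ⟨hnorm, hprime, hdvd⟩ := hG f hf
    obtain ⟨g, hgmem, hassoc⟩ :=
      UniqueFactorizationMonoid.exists_mem_normalizedFactors_of_dvd hPne hprime.irreducible hdvd
    have : normalize f = normalize g := normalize_eq_normalize hassoc.dvd hassoc.symm.dvd
    rw [hnorm, UniqueFactorizationMonoid.normalize_normalized_factor g hgmem] at this
    rwa [this]
  have hle : G.val ≤ UniqueFactorizationMonoid.normalizedFactors (X ^ c - 1 : F[X]) := by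
    rw [Multiset.le_iff_count]
    intro a
    by_cases ha : a ∈ G
    · have h1 : G.val.count a = 1 := Multiset.count_eq_one_of_mem G.nodup ha
      rw [h1]
      exact Multiset.one_le_count_iff_mem.mpr (hmem a ha)
    · have : G.val.count a = 0 := Multiset.count_eq_zero_of_notMem ha
      omega
  have hdvd : (∏ f ∈ G, f) ∣ (X ^ c - 1 : F[X]) := by
    have h1 := Multiset.prod_dvd_prod_of_le hle
    have h2 : (UniqueFactorizationMonoid.normalizedFactors (X ^ c - 1 : F[X])).prod
        ∣ (X ^ c - 1 : F[X]) :=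
      (UniqueFactorizationMonoid.prod_normalizedFactors hPne).dvd
    have h3 : (∏ f ∈ G, f) = G.val.prod := by
      rw [Finset.prod_eq_multiset_prod, Multiset.map_id']
    rw [h3]
    exact h1.trans h2
  calc ∑ f ∈ G, f.natDegree = (∏ f ∈ G, f).natDegree :=
        (Polynomial.natDegree_prod _ _ fun f hf => ((hG f hf).2.1).ne_zero).symm
  _ ≤ (X ^ c - 1 : F[X]).natDegree := Polynomial.natDegree_le_of_dvd hdvd hPne
  _ = c := by rw [hP, natDegree_X_pow_sub_C]

-- (L1 & L2)
private lemma factor_facts [CharP F 3] {r q : ℕ} (hr : 0 < r) (hq : q = 3 ^ r)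
    (hF : Fintype.card F = q) {n : ℕ} (hn : 0 < n) {f : Polynomial F}
    (hirr : Irreducible f) (hdvd : f ∣ (X ^ n - 1 : Polynomial F))
    {u : ℕ} (hnu : n ∣ q ^ u - 1) :
    f.natDegree ∣ u ∧ f ∣ (X ^ (Nat.gcd n (q ^ f.natDegree - 1)) - 1 : Polynomial F) := by
  classical
  have hq3 : 3 ≤ q := by rw [hq]; calc (3:ℕ) = 3^1 := (pow_one 3).symm
                                    _ ≤ 3 ^ r := Nat.pow_le_pow_right (by norm_num) hr
  haveI : Fact (Irreducible f) := ⟨hirr⟩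
  haveI : Fact (Nat.Prime 3) := ⟨by norm_num⟩
  set K := AdjoinRoot f with hK
  have hf0 : f ≠ 0 := hirr.ne_zero
  set pb := AdjoinRoot.powerBasis hf0 with hpb
  haveI : Fintype K := Module.fintypeOfFintype pb.basis
  set d := f.natDegree with hd
  have hd1 : 0 < d := hirr.natDegree_pos
  have hcardK : Fintype.card K = q ^ d := by
    rw [Module.card_fintype pb.basis, hF]
    congr 1
    simp [hpb, AdjoinRoot.powerBasis_dim, hd]
  haveI : CharP K 3 := charP_of_injective_algebraMap (algebraMap F K).injective 3
  set θ := AdjoinRoot.root f with hθ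
  have hθn : θ ^ n = 1 := by
    have h1 : AdjoinRoot.mk f ((X : F[X]) ^ n - 1) = 0 := AdjoinRoot.mk_eq_zero.mpr hdvd
    have h2 : AdjoinRoot.mk f ((X : F[X]) ^ n - 1) = θ ^ n - 1 := by
      rw [map_sub, map_pow, map_one, AdjoinRoot.mk_X]
    rw [h2] at h1
    linear_combination h1
  have hθ0 : θ ≠ 0 := by
    intro h
    rw [h, zero_pow (by omega)] at hθn
    exact zero_ne_one hθn
  -- conclusion 2
  have hqd1 : 1 ≤ q ^ d := Nat.one_le_pow _ _ (by omega)
  have hθqd : θ ^ (q ^ d - 1) = 1 := by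
    have h1 : θ ^ (q ^ d) = θ := by
      have := FiniteField.pow_card θ
      rwa [hcardK] at this
    have h2 : θ ^ (q ^ d - 1) * θ = 1 * θ := by
      rw [one_mul, ← pow_succ, Nat.sub_add_cancel hqd1, h1]
    exact mul_right_cancel₀ hθ0 h2
  have hord1 : orderOf θ ∣ n := orderOf_dvd_of_pow_eq_one hθn
  have hord2 : orderOf θ ∣ q ^ d - 1 := orderOf_dvd_of_pow_eq_one hθqd
  have hordg : orderOf θ ∣ Nat.gcd n (q ^ d - 1) := Nat.dvd_gcd hord1 hord2
  have hconc2 : f ∣ (X ^ (Nat.gcd n (q ^ d - 1)) - 1 : Polynomial F) := by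
    rw [← AdjoinRoot.mk_eq_zero]
    have : θ ^ (Nat.gcd n (q ^ d - 1)) = 1 := orderOf_dvd_iff_pow_eq_one.mp hordg
    rw [map_sub, map_pow, map_one, AdjoinRoot.mk_X]
    rw [← hθ] at *
    rw [this]
    ring
  -- conclusion 1
  have hqu1 : 1 ≤ q ^ u := Nat.one_le_pow _ _ (by omega)
  set φ := iterateFrobenius K 3 (r * u) with hφdef
  have hφ : ∀ x : K, φ x = x ^ q ^ u := by
    intro x
    rw [hφdef, iterateFrobenius_def, hq, ← pow_mul]
  have hfixF : ∀ a : F, φ (algebraMap F K a) = algebraMap F K a := by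
    intro a
    rw [hφ, ← map_pow]
    congr 1
    have := FiniteField.pow_card_pow u a
    rwa [hF] at this
  have hfixθ : φ θ = θ := by
    rw [hφ]
    obtain ⟨t, ht⟩ := hnu
    have : q ^ u = n * t + 1 := by omega
    rw [this, pow_add, pow_one, pow_mul, hθn, one_pow, one_mul]
  have hfix : ∀ x : K, x ^ q ^ u = x := by
    intro x
    obtain ⟨P, rfl⟩ := AdjoinRoot.mk_surjective x
    rw [← hφ]
    have h1 : AdjoinRoot.mk f P = Polynomial.eval₂ (algebraMap F K) θ P := by
      rw [← AdjoinRoot.aeval_eq, Polynomial.aeval_def]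
    rw [h1, Polynomial.hom_eval₂]
    have h2 : φ.comp (algebraMap F K) = algebraMap F K := RingHom.ext hfixF
    rw [h2, hfixθ]
  -- cyclic units
  obtain ⟨γ, hγ⟩ := IsCyclic.exists_generator (α := Kˣ)
  have hγcard : orderOf γ = q ^ d - 1 := by
    have h1 := orderOf_eq_card_of_forall_mem_zpowers hγ
    rw [h1, Nat.card_eq_fintype_card, Fintype.card_units, hcardK]
  have hγpow : γ ^ (q ^ u - 1) = 1 := by
    have h1 : ((γ : K)) ^ (q ^ u) = (γ : K) := hfix _
    have h2 : ((γ : K)) ^ (q ^ u - 1) * (γ : K) = 1 * (γ : K) := by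
      rw [one_mul, ← pow_succ, Nat.sub_add_cancel hqu1, h1]
    have h3 : ((γ : K)) ^ (q ^ u - 1) = 1 := mul_right_cancel₀ (Units.ne_zero γ) h2
    ext
    push_cast
    exact h3
  have hdvd_ord : q ^ d - 1 ∣ q ^ u - 1 := by
    rw [← hγcard]
    exact orderOf_dvd_of_pow_eq_one hγpow
  exact ⟨nat_dvd_of_pow_sub_one_dvd (by omega) hd1 hdvd_ord, hconc2⟩

end FieldHelpers

/-- Bounds on the ratio `ϑ(q,m) = M/m`, where `M` is the number of distinct monic irreducible
factors of `x^m − 1` over `F_q` (`q = 3^r`) of degree less than the multiplicative order `u`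
of `q` modulo `m'`. -/
theorem theta_ratio_bounds (r : ℕ) (hr : 0 < r) (q : ℕ) (hq : q = 3 ^ r)
    (m m' j : ℕ) (hm : 2 ≤ m) (hmm : m = m' * 3 ^ j) (hm3 : Nat.gcd m' 3 = 1)
    (hndvd : ¬ m' ∣ q - 1)
    (F : Type*) [Field F] [Fintype F] [DecidableEq F] (hF : Fintype.card F = q)
    (u : ℕ) (hu : u = orderOf (q : ZMod m'))
    (M : ℕ)
    (hM : M = ((UniqueFactorizationMonoid.normalizedFactors
        ((X : Polynomial F) ^ m - 1)).toFinset.filter fun f => f.natDegree < u).card) :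
    (m = 2 * Nat.gcd (q - 1) m' → (M : ℚ) / m ≤ 1 / 2) ∧
    (m = 4 * Nat.gcd (q - 1) m' → (M : ℚ) / m ≤ 3 / 8) ∧
    (m ≠ 2 * Nat.gcd (q - 1) m' → m ≠ 4 * Nat.gcd (q - 1) m' → (M : ℚ) / m ≤ 1 / 3) := by
  classical
  have hq3 : 3 ≤ q := by
    rw [hq]
    calc (3:ℕ) = 3 ^ 1 := (pow_one 3).symm
    _ ≤ 3 ^ r := Nat.pow_le_pow_right (by norm_num) hr
  have hq0 : 0 < q := by omega
  have hn0 : 0 < m' := by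
    rcases Nat.eq_zero_or_pos m' with h | h
    · exfalso; rw [h] at hmm; omega
    · exact h
  have hn1 : m' ≠ 1 := fun h => hndvd (by rw [h]; exact one_dvd _)
  have hn2 : 2 ≤ m' := by omega
  haveI : NeZero m' := ⟨by omega⟩
  have h3n : ¬ (3 ∣ m') := by
    intro h
    have h2 := Nat.dvd_gcd h (dvd_refl 3)
    rw [hm3] at h2
    exact absurd (Nat.le_of_dvd one_pos h2) (by norm_num)
  have hcop : Nat.Coprime q m' := by
    rw [hq]
    exact Nat.Coprime.pow_left r (Nat.coprime_comm.mp hm3)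
  -- characteristic
  haveI : Fact (Nat.Prime 3) := ⟨by norm_num⟩
  haveI hchar : CharP F 3 := by
    have hprime : (ringChar F).Prime := CharP.char_is_prime F (ringChar F)
    have hdvd : ringChar F ∣ q := by
      have h0 : ((q : ℕ) : F) = 0 := by rw [← hF]; exact FiniteField.cast_card_eq_zero F
      exact (CharP.cast_eq_zero_iff F (ringChar F) q).mp h0
    have heq3 : ringChar F = 3 := by
      rw [hq] at hdvd
      have h3 := hprime.dvd_of_dvd_pow hdvd
      exact (Nat.prime_dvd_prime_iff_eq hprime (by norm_num)).mp h3
    rw [← heq3]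
    exact ringChar.charP F
  -- polynomial identity
  have hpoly : ((X : Polynomial F) ^ m - 1) = ((X : Polynomial F) ^ m' - 1) ^ 3 ^ j := by
    have h1 : ((X : Polynomial F) ^ m' - 1) ^ 3 ^ j
        = ((X : Polynomial F) ^ m') ^ 3 ^ j - 1 ^ 3 ^ j :=
      sub_pow_char_pow (p := 3) ((X : Polynomial F) ^ m') 1 j
    rw [h1, one_pow, ← pow_mul, ← hmm]
  set T := (UniqueFactorizationMonoid.normalizedFactors
      ((X : Polynomial F) ^ m - 1)).toFinset with hT
  have hTfact : ∀ f ∈ T, normalize f = f ∧ Prime f ∧ f ∣ ((X : Polynomial F) ^ m' - 1) := by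
    intro f hf
    rw [hT, Multiset.mem_toFinset] at hf
    refine ⟨UniqueFactorizationMonoid.normalize_normalized_factor f hf,
      UniqueFactorizationMonoid.prime_of_normalized_factor f hf, ?_⟩
    have h1 : f ∣ ((X : Polynomial F) ^ m - 1) :=
      UniqueFactorizationMonoid.dvd_of_mem_normalizedFactors hf
    rw [hpoly] at h1
    exact (UniqueFactorizationMonoid.prime_of_normalized_factor f hf).dvd_of_dvd_pow h1
  -- order facts
  have hu_pos : 0 < u := by
    rw [hu]
    have h1 : 0 < orderOf (ZMod.unitOfCoprime q hcop) := orderOf_pos _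
    rwa [← orderOf_units, ZMod.coe_unitOfCoprime] at h1
  have horder : ∀ s : ℕ, (q : ZMod m') ^ s = 1 → m' ∣ q ^ s - 1 := by
    intro s hs
    have h1 : ((q ^ s : ℕ) : ZMod m') = ((1 : ℕ) : ZMod m') := by push_cast; rw [hs]
    have h2 : q ^ s ≡ 1 [MOD m'] := (ZMod.natCast_eq_natCast_iff _ _ _).mp h1
    exact (Nat.modEq_iff_dvd' (Nat.one_le_pow _ _ hq0)).mp h2.symm
  have hnqu : m' ∣ q ^ u - 1 := by
    apply horder
    rw [hu]
    exact pow_orderOf_eq_one _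
  have hu1 : u ≠ 1 := by
    intro h
    apply hndvd
    have h1 : (q : ZMod m') ^ u = 1 := by rw [hu]; exact pow_orderOf_eq_one _
    rw [h] at h1
    have h2 := horder 1 h1
    rwa [pow_one] at h2
  have hu2 : 2 ≤ u := by omega
  -- P3
  have hP3 : ∀ d : ℕ, d ∣ u → Nat.gcd m' (q ^ d - 1) * u ≤ m' * d := by
    intro d hdu
    have h := gcd_mul_order_le hn2 hcop d
    rw [← hu, Nat.gcd_comm u d, Nat.gcd_eq_left hdu] at h
    exact h
  -- g and b
  obtain ⟨g, hgdef⟩ : ∃ g, Nat.gcd m' (q - 1) = g := ⟨_, rfl⟩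
  have hgcomm : Nat.gcd (q - 1) m' = g := by rw [Nat.gcd_comm]; exact hgdef
  have hgdvd : g ∣ m' := by rw [← hgdef]; exact Nat.gcd_dvd_left _ _
  have hgq : g ∣ q - 1 := by rw [← hgdef]; exact Nat.gcd_dvd_right _ _
  have hgpos : 0 < g := by rw [← hgdef]; exact Nat.gcd_pos_of_pos_left _ hn0
  obtain ⟨b, hb⟩ := hgdvd
  have hgdvd' : g ∣ m' := ⟨b, hb⟩
  -- Tshort, S, M
  set Tshort := T.filter (fun f => f.natDegree < u) with hTs
  have hTsub : Tshort ⊆ T := Finset.filter_subset _ _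
  have hdegfacts : ∀ f ∈ T, f.natDegree ∣ u ∧
      f ∣ ((X : Polynomial F) ^ (Nat.gcd m' (q ^ f.natDegree - 1)) - 1) := by
    intro f hf
    obtain ⟨hnorm, hprime, hdvd⟩ := hTfact f hf
    exact factor_facts hr hq hF hn0 hprime.irreducible hdvd hnqu
  have hdeg1 : ∀ f ∈ T, 1 ≤ f.natDegree := fun f hf =>
    ((hTfact f hf).2.1).irreducible.natDegree_pos
  obtain ⟨S, hSdef⟩ : ∃ S : ℕ → ℕ,
      ∀ d, S d = (Tshort.filter (fun f => f.natDegree = d)).card :=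
    ⟨_, fun d => rfl⟩
  have hMsum : M = ∑ d ∈ u.properDivisors, S d := by
    have h0 := Finset.card_eq_sum_card_fiberwise
      (f := fun f => f.natDegree) (s := Tshort) (t := u.properDivisors)
      (fun f hf => by
        rw [Finset.mem_coe, Nat.mem_properDivisors]
        exact ⟨(hdegfacts f (hTsub hf)).1, (Finset.mem_filter.mp hf).2⟩)
    rw [hM, h0]
    exact Finset.sum_congr rfl fun d _ => (hSdef d).symm
  -- sum of degrees bounds
  have hV : ∀ s : ℕ, 0 < s → ∑ f ∈ Tshort.filter (fun f => f.natDegree ∣ s), f.natDegree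
      ≤ Nat.gcd m' (q ^ s - 1) := by
    intro s hs
    apply sum_deg_le _ (Nat.gcd_pos_of_pos_left _ hn0)
    · intro h3
      exact h3n (h3.trans (Nat.gcd_dvd_left _ _))
    · intro f hf
      rw [Finset.mem_filter] at hf
      obtain ⟨hfT, hfdvd⟩ := hf
      have hfT' := hTsub hfT
      obtain ⟨hnorm, hprime, _⟩ := hTfact f hfT'
      refine ⟨hnorm, hprime, ?_⟩
      have h2 := (hdegfacts f hfT').2
      have h3 : Nat.gcd m' (q ^ f.natDegree - 1) ∣ Nat.gcd m' (q ^ s - 1) :=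
        Nat.dvd_gcd (Nat.gcd_dvd_left _ _)
          ((Nat.gcd_dvd_right _ _).trans (nat_pow_sub_one_dvd hfdvd))
      exact h2.trans (poly_pow_sub_one_dvd h3)
  have hfib : ∀ s : ℕ, 0 < s → ∑ d ∈ s.divisors, d * S d ≤ Nat.gcd m' (q ^ s - 1) := by
    intro s hs
    have hmapsto : ∀ f ∈ Tshort.filter (fun f => f.natDegree ∣ s),
        f.natDegree ∈ s.divisors := by
      intro f hf
      rw [Finset.mem_filter] at hf
      rw [Nat.mem_divisors]
      exact ⟨hf.2, by omega⟩
    have heq1 := Finset.sum_fiberwise_of_maps_to hmapsto (fun f => f.natDegree)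
    have heq2 : ∀ d ∈ s.divisors,
        ∑ f ∈ (Tshort.filter (fun f => f.natDegree ∣ s)).filter (fun f => f.natDegree = d),
          f.natDegree = d * S d := by
      intro d hd
      have hset : (Tshort.filter (fun f => f.natDegree ∣ s)).filter (fun f => f.natDegree = d)
          = Tshort.filter (fun f => f.natDegree = d) := by
        ext f
        simp only [Finset.mem_filter, and_assoc]
        constructor
        · rintro ⟨h1, h2, h3⟩; exact ⟨h1, h3⟩
        · rintro ⟨h1, h3⟩; exact ⟨h1, h3 ▸ (Nat.mem_divisors.mp hd).1, h3⟩
      have hconst : ∀ f ∈ Tshort.filter (fun f => f.natDegree = d), f.natDegree = d :=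
        fun f hf => (Finset.mem_filter.mp hf).2
      rw [hset, Finset.sum_congr rfl hconst, Finset.sum_const, smul_eq_mul, mul_comm,
        hSdef d]
    calc ∑ d ∈ s.divisors, d * S d
        = ∑ d ∈ s.divisors, ∑ f ∈ (Tshort.filter (fun f => f.natDegree ∣ s)).filter
            (fun f => f.natDegree = d), f.natDegree :=
          (Finset.sum_congr rfl fun d hd => (heq2 d hd).symm)
    _ = ∑ f ∈ Tshort.filter (fun f => f.natDegree ∣ s), f.natDegree := heq1
    _ ≤ Nat.gcd m' (q ^ s - 1) := hV s hs
  -- instantiated fiber bounds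
  have hfib1 : S 1 ≤ g := by
    have h := hfib 1 (by norm_num)
    rw [show (1:ℕ).divisors = {1} by decide, Finset.sum_singleton, pow_one, hgdef] at h
    omega
  have hfib2 : S 1 + 2 * S 2 ≤ Nat.gcd m' (q ^ 2 - 1) := by
    have h := hfib 2 (by norm_num)
    rw [show (2:ℕ).divisors = {1, 2} by decide, Finset.sum_insert (by decide),
      Finset.sum_singleton] at h
    omega
  have hfib3 : S 1 + 3 * S 3 ≤ Nat.gcd m' (q ^ 3 - 1) := by
    have h := hfib 3 (by norm_num)
    rw [show (3:ℕ).divisors = {1, 3} by decide, Finset.sum_insert (by decide),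
      Finset.sum_singleton] at h
    omega
  have hfib4 : S 1 + 2 * S 2 + 4 * S 4 ≤ Nat.gcd m' (q ^ 4 - 1) := by
    have h := hfib 4 (by norm_num)
    rw [show (4:ℕ).divisors = {1, 2, 4} by decide, Finset.sum_insert (by decide),
      Finset.sum_insert (by decide), Finset.sum_singleton] at h
    omega
  have hfib6 : S 1 + 2 * S 2 + 3 * S 3 + 6 * S 6 ≤ Nat.gcd m' (q ^ 6 - 1) := by
    have h := hfib 6 (by norm_num)
    rw [show (6:ℕ).divisors = {1, 2, 3, 6} by decide, Finset.sum_insert (by decide),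
      Finset.sum_insert (by decide), Finset.sum_insert (by decide), Finset.sum_singleton] at h
    omega
  have hgA : ∀ s : ℕ, g ∣ Nat.gcd m' (q ^ s - 1) := by
    intro s
    rw [← hgdef]
    refine Nat.dvd_gcd (Nat.gcd_dvd_left _ _) ((Nat.gcd_dvd_right _ _).trans ?_)
    have h : (q:ℕ) - 1 = q ^ 1 - 1 := by rw [pow_one]
    rw [h]
    exact nat_pow_sub_one_dvd (one_dvd s)
  -- index lemma
  have hIDX : ∀ a c : ℕ, a ∣ m' → 0 < a → 3 ∣ c → c * a ≤ m' → (c + 1) * a ≤ m' := by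
    intro a c hdvd hpos h3c hle
    obtain ⟨x, hx⟩ := hdvd
    have hxc : c ≤ x := by
      have h1 : c * a ≤ x * a := by rw [mul_comm x a, ← hx]; exact hle
      exact Nat.le_of_mul_le_mul_right h1 hpos
    have hxne : x ≠ c := by
      intro h
      apply h3n
      obtain ⟨t, ht⟩ := h3c
      exact ⟨a * t, by rw [hx, h, ht]; ring⟩
    have hx1 : c + 1 ≤ x := by omega
    calc (c + 1) * a ≤ x * a := Nat.mul_le_mul_right _ hx1
    _ = m' := by rw [hx]; ring
  -- Case (iii) j = 0 core: 3 * M ≤ m'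
  have hcore : m ≠ 2 * g → m ≠ 4 * g → j = 0 → 3 * M ≤ m' := by
    intro hne2 hne4 hj0
    have hmn : m = m' := by rw [hmm, hj0]; simp
    have hbne1 : b ≠ 1 := by
      intro h
      apply hndvd
      have hb' := hb
      rw [h, mul_one] at hb'
      have hng : m' = g := hb'
      rw [hng]
      exact hgq
    have hbne2 : b ≠ 2 := fun h => hne2 (by rw [hmn, hb, h]; ring)
    have hbne4 : b ≠ 4 := fun h => hne4 (by rw [hmn, hb, h]; ring)
    have hb3 : ¬ (3 ∣ b) := by
      intro h
      apply h3n
      obtain ⟨t, ht⟩ := h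
      exact ⟨g * t, by rw [hb, ht]; ring⟩
    have hbne3 : b ≠ 3 := fun h => hb3 (by rw [h])
    have hbne6 : b ≠ 6 := fun h => hb3 (by rw [h]; norm_num)
    have hbne0 : b ≠ 0 := by
      intro h; rw [h, mul_zero] at hb; omega
    have hb5 : 5 ≤ b := by omega
    have h5g : 5 * g ≤ m' := by
      calc 5 * g ≤ b * g := Nat.mul_le_mul_right _ hb5
      _ = m' := by rw [hb]; ring
    have hbeven : ∀ a x : ℕ, g ∣ a → m' = a * x → 2 ∣ x → 8 * g ≤ m' := by
      intro a x hga hnax h2x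
      obtain ⟨y, hy⟩ := hga
      have hbxy : b = y * x := by
        have h1 : g * b = g * (y * x) := by
          rw [← hb, hnax, hy]; ring
        exact Nat.eq_of_mul_eq_mul_left hgpos h1
      have h2b : 2 ∣ b := by
        obtain ⟨t, ht⟩ := h2x
        exact ⟨y * t, by rw [hbxy, ht]; ring⟩
      have hb8 : 8 ≤ b := by
        obtain ⟨t, ht⟩ := h2b
        omega
      calc 8 * g ≤ b * g := Nat.mul_le_mul_right _ hb8
      _ = m' := by rw [hb]; ring
    by_cases hu_2 : u = 2
    · have hM1 : M = S 1 := by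
        rw [hMsum, hu_2, show (2:ℕ).properDivisors = {1} by decide, Finset.sum_singleton]
      omega
    by_cases hu_3 : u = 3
    · have hM1 : M = S 1 := by
        rw [hMsum, hu_3, show (3:ℕ).properDivisors = {1} by decide, Finset.sum_singleton]
      omega
    by_cases hu_4 : u = 4
    · have hM4 : M = S 1 + S 2 := by
        rw [hMsum, hu_4, show (4:ℕ).properDivisors = {1, 2} by decide,
          Finset.sum_insert (by decide), Finset.sum_singleton]
      have hA2u : Nat.gcd m' (q ^ 2 - 1) * 4 ≤ m' * 2 := by
        have h := hP3 2 (by rw [hu_4]; norm_num)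
        rwa [hu_4] at h
      by_cases hA2small : 5 * Nat.gcd m' (q ^ 2 - 1) ≤ m'
      · omega
      · push_neg at hA2small
        obtain ⟨x, hx⟩ := Nat.gcd_dvd_left m' (q ^ 2 - 1)
        have hA2pos : 0 < Nat.gcd m' (q ^ 2 - 1) := Nat.gcd_pos_of_pos_left _ hn0
        have hx2 : 2 ≤ x := by
          by_contra hcon
          push_neg at hcon
          have hx1 : x ≤ 1 := by omega
          have h5 : Nat.gcd m' (q ^ 2 - 1) * x ≤ Nat.gcd m' (q ^ 2 - 1) * 1 :=
            Nat.mul_le_mul_left _ hx1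
          rw [← hx, mul_one] at h5
          omega
        have hx5 : x < 5 := by
          by_contra hcon
          push_neg at hcon
          have h5 : Nat.gcd m' (q ^ 2 - 1) * 5 ≤ Nat.gcd m' (q ^ 2 - 1) * x :=
            Nat.mul_le_mul_left _ hcon
          rw [← hx] at h5
          omega
        have hx3 : x ≠ 3 := by
          intro h
          apply h3n
          rw [hx, h]
          exact ⟨Nat.gcd m' (q ^ 2 - 1), by ring⟩
        have h2x : 2 ∣ x := by interval_cases x <;> omega
        have h8g : 8 * g ≤ m' := hbeven _ x (hgA 2) hx h2x
        omega
    by_cases hu_6 : u = 6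
    · have hM6 : M = S 1 + S 2 + S 3 := by
        rw [hMsum, hu_6, show (6:ℕ).properDivisors = {1, 2, 3} by decide,
          Finset.sum_insert (by decide), Finset.sum_insert (by decide), Finset.sum_singleton]
        ring
      have hA2u : Nat.gcd m' (q ^ 2 - 1) * 6 ≤ m' * 2 := by
        have h := hP3 2 (by rw [hu_6]; norm_num)
        rwa [hu_6] at h
      have hA3u : Nat.gcd m' (q ^ 3 - 1) * 6 ≤ m' * 3 := by
        have h := hP3 3 (by rw [hu_6]; norm_num)
        rwa [hu_6] at h
      have hA2cap : 4 * Nat.gcd m' (q ^ 2 - 1) ≤ m' := by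
        have := hIDX (Nat.gcd m' (q ^ 2 - 1)) 3 (Nat.gcd_dvd_left _ _)
          (Nat.gcd_pos_of_pos_left _ hn0) (by norm_num) (by omega)
        omega
      by_cases hA3small : 4 * Nat.gcd m' (q ^ 3 - 1) ≤ m'
      · omega
      · push_neg at hA3small
        obtain ⟨x, hx⟩ := Nat.gcd_dvd_left m' (q ^ 3 - 1)
        have hA3pos : 0 < Nat.gcd m' (q ^ 3 - 1) := Nat.gcd_pos_of_pos_left _ hn0
        have hx2 : 2 ≤ x := by
          by_contra hcon
          push_neg at hcon
          have hx1 : x ≤ 1 := by omega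
          have h5 : Nat.gcd m' (q ^ 3 - 1) * x ≤ Nat.gcd m' (q ^ 3 - 1) * 1 :=
            Nat.mul_le_mul_left _ hx1
          rw [← hx, mul_one] at h5
          omega
        have hx4 : x < 4 := by
          by_contra hcon
          push_neg at hcon
          have h5 : Nat.gcd m' (q ^ 3 - 1) * 4 ≤ Nat.gcd m' (q ^ 3 - 1) * x :=
            Nat.mul_le_mul_left _ hcon
          rw [← hx] at h5
          omega
        have hx3 : x ≠ 3 := by
          intro h
          apply h3n
          rw [hx, h]
          exact ⟨Nat.gcd m' (q ^ 3 - 1), by ring⟩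
        have h2x : 2 ∣ x := by interval_cases x <;> omega
        have h8g : 8 * g ≤ m' := hbeven _ x (hgA 3) hx h2x
        omega
    by_cases hu_8 : u = 8
    · have hM8 : M = S 1 + S 2 + S 4 := by
        rw [hMsum, hu_8, show (8:ℕ).properDivisors = {1, 2, 4} by decide,
          Finset.sum_insert (by decide), Finset.sum_insert (by decide), Finset.sum_singleton]
        ring
      have hA2u : Nat.gcd m' (q ^ 2 - 1) * 8 ≤ m' * 2 := by
        have h := hP3 2 (by rw [hu_8]; norm_num)
        rwa [hu_8] at h
      have hA4u : Nat.gcd m' (q ^ 4 - 1) * 8 ≤ m' * 4 := by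
        have h := hP3 4 (by rw [hu_8]; norm_num)
        rwa [hu_8] at h
      omega
    by_cases hu_12 : u = 12
    · have hM12 : M = S 1 + S 2 + S 3 + S 4 + S 6 := by
        rw [hMsum, hu_12, show (12:ℕ).properDivisors = {1, 2, 3, 4, 6} by decide,
          Finset.sum_insert (by decide), Finset.sum_insert (by decide),
          Finset.sum_insert (by decide), Finset.sum_insert (by decide), Finset.sum_singleton]
        ring
      have hA2u : Nat.gcd m' (q ^ 2 - 1) * 12 ≤ m' * 2 := by
        have h := hP3 2 (by rw [hu_12]; norm_num)
        rwa [hu_12] at h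
      have hA3u : Nat.gcd m' (q ^ 3 - 1) * 12 ≤ m' * 3 := by
        have h := hP3 3 (by rw [hu_12]; norm_num)
        rwa [hu_12] at h
      have hA4u : Nat.gcd m' (q ^ 4 - 1) * 12 ≤ m' * 4 := by
        have h := hP3 4 (by rw [hu_12]; norm_num)
        rwa [hu_12] at h
      have hA6u : Nat.gcd m' (q ^ 6 - 1) * 12 ≤ m' * 6 := by
        have h := hP3 6 (by rw [hu_12]; norm_num)
        rwa [hu_12] at h
      have hA2cap : 7 * Nat.gcd m' (q ^ 2 - 1) ≤ m' := by
        have := hIDX (Nat.gcd m' (q ^ 2 - 1)) 6 (Nat.gcd_dvd_left _ _)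
          (Nat.gcd_pos_of_pos_left _ hn0) (by norm_num) (by omega)
        omega
      have hA4cap : 4 * Nat.gcd m' (q ^ 4 - 1) ≤ m' := by
        have := hIDX (Nat.gcd m' (q ^ 4 - 1)) 3 (Nat.gcd_dvd_left _ _)
          (Nat.gcd_pos_of_pos_left _ hn0) (by norm_num) (by omega)
        omega
      omega
    · -- general u
      have hSu : ∀ d ∈ u.properDivisors, S d * u ≤ m' := by
        intro d hd
        obtain ⟨hdu, hdlt⟩ := Nat.mem_properDivisors.mp hd
        have hd0 : 0 < d := Nat.pos_of_mem_properDivisors hd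
        have h1 : d * S d ≤ Nat.gcd m' (q ^ d - 1) := by
          have h := hfib d hd0
          have hdd : d ∈ d.divisors := Nat.mem_divisors_self d (by omega)
          calc d * S d ≤ ∑ d' ∈ d.divisors, d' * S d' :=
                Finset.single_le_sum (f := fun d' => d' * S d')
                  (fun i _ => Nat.zero_le _) hdd
          _ ≤ _ := h
        have h2 := hP3 d hdu
        have h3 : S d * u * d ≤ m' * d := by
          calc S d * u * d = (d * S d) * u := by ring
          _ ≤ Nat.gcd m' (q ^ d - 1) * u := Nat.mul_le_mul_right _ h1
          _ ≤ m' * d := h2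
        exact Nat.le_of_mul_le_mul_right h3 hd0
      have hMu : M * u ≤ u.properDivisors.card * m' := by
        rw [hMsum, Finset.sum_mul]
        calc ∑ d ∈ u.properDivisors, S d * u ≤ ∑ _d ∈ u.properDivisors, m' :=
              Finset.sum_le_sum hSu
        _ = u.properDivisors.card * m' := by rw [Finset.sum_const, smul_eq_mul]
      have htau := three_mul_card_properDivisors_le hu2 hu_2 hu_4 hu_6 hu_8 hu_12
      have h1 : 3 * M * u ≤ u * m' := by
        calc 3 * M * u = 3 * (M * u) := by ring
        _ ≤ 3 * (u.properDivisors.card * m') := Nat.mul_le_mul_left _ hMu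
        _ = (3 * u.properDivisors.card) * m' := by ring
        _ ≤ u * m' := Nat.mul_le_mul_right _ htau
      apply Nat.le_of_mul_le_mul_right _ hu_pos
      calc 3 * M * u ≤ u * m' := h1
      _ = m' * u := by ring
  -- Case j ≥ 1 : 3 * M ≤ m always
  have hcase_j : 1 ≤ j → 3 * M ≤ m := by
    intro hj
    have hMT : M ≤ ∑ f ∈ T, f.natDegree := by
      rw [hM]
      calc Tshort.card ≤ T.card := Finset.card_le_card hTsub
      _ = ∑ _f ∈ T, 1 := by rw [Finset.sum_const, smul_eq_mul, mul_one]
      _ ≤ ∑ f ∈ T, f.natDegree := Finset.sum_le_sum hdeg1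
    have hTn : ∑ f ∈ T, f.natDegree ≤ m' := by
      apply sum_deg_le m' hn0 h3n
      intro f hf
      exact hTfact f hf
    have h3j : 3 ≤ 3 ^ j := by
      calc (3:ℕ) = 3 ^ 1 := (pow_one 3).symm
      _ ≤ 3 ^ j := Nat.pow_le_pow_right (by norm_num) hj
    calc 3 * M ≤ 3 * m' := by omega
    _ ≤ 3 ^ j * m' := Nat.mul_le_mul_right _ h3j
    _ = m := by rw [hmm]; ring
  have hm0Q : (0:ℚ) < (m:ℚ) := by exact_mod_cast (by omega : 0 < m)
  refine ⟨?_, ?_, ?_⟩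
  · -- m = 2 * gcd
    intro h2g
    rw [hgcomm] at h2g
    have hj0 : j = 0 := by
      by_contra hj
      have hj1 : 1 ≤ j := by omega
      have h3dvd : (3:ℕ) ∣ m' * 3 ^ j := Dvd.dvd.mul_left (dvd_pow_self 3 (by omega)) m'
      rw [← hmm, h2g] at h3dvd
      have h3g : (3:ℕ) ∣ g := Nat.Coprime.dvd_of_dvd_mul_left (by decide) h3dvd
      exact h3n (h3g.trans hgdvd')
    have hmn : m = m' := by rw [hmm, hj0]; simp
    have hn2g : m' = 2 * g := by omega
    have hu_le : u ≤ 2 := by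
      have h := hP3 1 (one_dvd u)
      rw [pow_one, hgdef, mul_one] at h
      have h2 : g * u ≤ g * 2 := by omega
      exact Nat.le_of_mul_le_mul_left h2 hgpos
    have hueq : u = 2 := by omega
    have hM1 : M = S 1 := by
      rw [hMsum, hueq, show (2:ℕ).properDivisors = {1} by decide, Finset.sum_singleton]
    have hfin : 2 * M ≤ m := by omega
    rw [div_le_div_iff₀ hm0Q (by norm_num : (0:ℚ) < 2)]
    calc (M:ℚ) * 2 = ((2 * M : ℕ) : ℚ) := by push_cast; ring
    _ ≤ ((m : ℕ) : ℚ) := by exact_mod_cast hfin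
    _ = 1 * (m:ℚ) := by ring
  · -- m = 4 * gcd
    intro h4g
    rw [hgcomm] at h4g
    have hj0 : j = 0 := by
      by_contra hj
      have hj1 : 1 ≤ j := by omega
      have h3dvd : (3:ℕ) ∣ m' * 3 ^ j := Dvd.dvd.mul_left (dvd_pow_self 3 (by omega)) m'
      rw [← hmm, h4g] at h3dvd
      have h3g : (3:ℕ) ∣ g := Nat.Coprime.dvd_of_dvd_mul_left (by decide) h3dvd
      exact h3n (h3g.trans hgdvd')
    have hmn : m = m' := by rw [hmm, hj0]; simp
    have hn4g : m' = 4 * g := by omega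
    have hu_le : u ≤ 4 := by
      have h := hP3 1 (one_dvd u)
      rw [pow_one, hgdef, mul_one] at h
      have h2 : g * u ≤ g * 4 := by omega
      exact Nat.le_of_mul_le_mul_left h2 hgpos
    have hfin : 8 * M ≤ 3 * m := by
      by_cases hueq : u = 4
      · have hM4 : M = S 1 + S 2 := by
          rw [hMsum, hueq, show (4:ℕ).properDivisors = {1, 2} by decide,
            Finset.sum_insert (by decide), Finset.sum_singleton]
        have hA2u : Nat.gcd m' (q ^ 2 - 1) * 4 ≤ m' * 2 := by
          have h := hP3 2 (by rw [hueq]; norm_num)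
          rwa [hueq] at h
        omega
      · have huu : u = 2 ∨ u = 3 := by omega
        have hM1 : M = S 1 := by
          rcases huu with h | h
          · rw [hMsum, h, show (2:ℕ).properDivisors = {1} by decide, Finset.sum_singleton]
          · rw [hMsum, h, show (3:ℕ).properDivisors = {1} by decide, Finset.sum_singleton]
        omega
    rw [div_le_div_iff₀ hm0Q (by norm_num : (0:ℚ) < 8)]
    calc (M:ℚ) * 8 = ((8 * M : ℕ) : ℚ) := by push_cast; ring
    _ ≤ ((3 * m : ℕ) : ℚ) := by exact_mod_cast hfin
    _ = 3 * (m:ℚ) := by push_cast; ring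
  · -- otherwise
    intro hne2 hne4
    rw [hgcomm] at hne2 hne4
    have hfin : 3 * M ≤ m := by
      rcases Nat.eq_zero_or_pos j with hj0 | hj1
      · have h1 := hcore hne2 hne4 hj0
        have hmn : m = m' := by rw [hmm, hj0]; simp
        omega
      · exact hcase_j hj1
    rw [div_le_div_iff₀ hm0Q (by norm_num : (0:ℚ) < 3)]
    calc (M:ℚ) * 3 = ((3 * M : ℕ) : ℚ) := by push_cast; ring
    _ ≤ ((m : ℕ) : ℚ) := by exact_mod_cast hfin
    _ = 1 * (m:ℚ) := by ring
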